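/- Let θ, φ ∈ ℝ^d, δ > 0, and set η = 2(1+δ)(θ − φ) + φ. Assume 0 < z(φ) < ∞, z(η) < ∞, and that the sufficient statistic has the finite moment ∫ |T_k(x)|^{2(1+δ)/δ} dp_φ(x) < ∞ for a coordinate k. Then E_{Y∼p_φ}[ (T_k(Y) q_θ(Y)/q_φ(Y))² ] < ∞, i.e. the importance-sampling estimate of the k-th coordinate of ∇_θ z(θ) based on draws from p_φ has finite variance. (The proof is via Hölder's inequality with exponents a = 1+δ and b = (1+δ)/δ.) -/

import Mathlib

open MeasureTheory

/-- Finite variance of the importance-sampling estimate of the k-th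
coordinate of `∇_θ z(θ)` under the proposal `p_φ`: with `η = 2(1+δ)(θ−φ)+φ`, if
`z(η) < ∞` and `∫ |T_k|^{2(1+δ)/δ} dp_φ < ∞`, then
`E_{Y∼p_φ}[(T_k(Y) q_θ(Y)/q_φ(Y))²] < ∞`. -/
theorem importance_sampling_gradient_finite_variance
    {X : Type*} [MeasurableSpace X] (μ : Measure X) [SigmaFinite μ]
    {d : ℕ} (T : X → Fin d → ℝ) (H : X → ℝ)
    (hT : Measurable T) (hH : Measurable H)
    (q : (Fin d → ℝ) → X → ℝ)
    (hq : ∀ η x, q η x = Real.exp ((∑ i, η i * T x i) + H x))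
    (z : (Fin d → ℝ) → ℝ)
    (hz : ∀ η, z η = ∫ x, q η x ∂μ)
    (θ φ : Fin d → ℝ) (δ : ℝ) (hδ : 0 < δ)
    (η : Fin d → ℝ) (hη : η = (2 * (1 + δ)) • (θ - φ) + φ)
    (hφint : Integrable (q φ) μ) (hzφ : 0 < z φ)
    (hηint : Integrable (q η) μ)
    (k : Fin d)
    (hmom : Integrable (fun x => |T x k| ^ (2 * (1 + δ) / δ))
      (μ.withDensity fun x => ENNReal.ofReal (q φ x / z φ))) :
    Integrable (fun x => (T x k * q θ x / q φ x) ^ 2)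
      (μ.withDensity fun x => ENNReal.ofReal (q φ x / z φ)) := by
  have hδ1 : (0:ℝ) < 1 + δ := by linarith
  set a : ℝ := 1 + δ with ha
  set b : ℝ := (1 + δ) / δ with hb
  have hb0 : (0:ℝ) < b := div_pos hδ1 hδ
  have hTk : Measurable fun x => T x k := (measurable_pi_apply k).comp hT
  have hS : ∀ ψ : Fin d → ℝ, Measurable fun x => (∑ i, ψ i * T x i) + H x := by
    intro ψ
    exact (Finset.measurable_sum _ fun i _ =>
      (measurable_const.mul ((measurable_pi_apply i).comp hT))).add hH
  have hqmeas : ∀ ψ, Measurable (q ψ) := by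
    intro ψ
    have : q ψ = fun x => Real.exp ((∑ i, ψ i * T x i) + H x) := funext (hq ψ)
    rw [this]; exact (hS ψ).exp
  have hqpos : ∀ ψ x, 0 < q ψ x := fun ψ x => by rw [hq]; exact Real.exp_pos _
  have hρmeas : Measurable fun x => ENNReal.ofReal (q φ x / z φ) :=
    ((hqmeas φ).div_const _).ennreal_ofReal
  have hρlt : ∀ᵐ x ∂μ, ENNReal.ofReal (q φ x / z φ) < ⊤ :=
    Filter.Eventually.of_forall fun x => ENNReal.ofReal_lt_top
  have hρtoReal : ∀ x, (ENNReal.ofReal (q φ x / z φ)).toReal = q φ x / z φ := fun x =>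
    ENNReal.toReal_ofReal (div_nonneg (hqpos φ x).le hzφ.le)
  -- transfer the moment hypothesis to `μ`
  rw [integrable_withDensity_iff hρmeas hρlt] at hmom
  have hmom' : Integrable (fun x => |T x k| ^ (2 * b) * q φ x) μ := by
    refine (hmom.const_mul (z φ)).congr (Filter.Eventually.of_forall fun x => ?_)
    simp only [hρtoReal]
    have e : 2 * a / δ = 2 * b := by rw [ha, hb]; ring
    rw [e]
    field_simp [hzφ.ne']
  -- the two Hölder factors
  set g₁ : X → ℝ := fun x => Real.exp (((∑ i, η i * T x i) + H x) / a) with hg₁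
  set g₂ : X → ℝ := fun x => |T x k| ^ 2 * Real.exp (δ * ((∑ i, φ i * T x i) + H x) / a)
    with hg₂
  have hg₁meas : Measurable g₁ := ((hS η).div_const _).exp
  have hg₂meas : Measurable g₂ :=
    (hTk.abs.pow measurable_const).mul ((measurable_const.mul (hS φ)).div_const _).exp
  have hga : ENNReal.ofReal a ≠ 0 := by
    simpa [ENNReal.ofReal_eq_zero, not_le] using hδ1
  have hgb : ENNReal.ofReal b ≠ 0 := by
    simpa [ENNReal.ofReal_eq_zero, not_le] using hb0
  have hmem₁ : MemLp g₁ (ENNReal.ofReal a) μ := by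
    rw [← memLp_norm_rpow_iff hg₁meas.aestronglyMeasurable hga ENNReal.ofReal_ne_top,
      ENNReal.div_self hga ENNReal.ofReal_ne_top, memLp_one_iff_integrable]
    refine hηint.congr (Filter.Eventually.of_forall fun x => ?_)
    simp only [ENNReal.toReal_ofReal hδ1.le]
    rw [hq η x, Real.norm_of_nonneg (Real.exp_pos _).le,
      ← Real.exp_mul, div_mul_cancel₀ _ hδ1.ne']
  have hmem₂ : MemLp g₂ (ENNReal.ofReal b) μ := by
    rw [← memLp_norm_rpow_iff hg₂meas.aestronglyMeasurable hgb ENNReal.ofReal_ne_top,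
      ENNReal.div_self hgb ENNReal.ofReal_ne_top, memLp_one_iff_integrable]
    refine hmom'.congr (Filter.Eventually.of_forall fun x => ?_)
    have h2 : (0:ℝ) ≤ |T x k| ^ 2 := sq_nonneg _
    simp only [ENNReal.toReal_ofReal hb0.le]
    have e1 : δ * ((∑ i, φ i * T x i) + H x) / a * b = (∑ i, φ i * T x i) + H x := by
      rw [ha, hb]; field_simp
    rw [hq φ x, Real.norm_of_nonneg (mul_nonneg h2 (Real.exp_pos _).le),
      Real.mul_rpow h2 (Real.exp_pos _).le, ← Real.exp_mul, e1]
    congr 1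
    rw [← Real.rpow_natCast (|T x k|) 2, ← Real.rpow_mul (abs_nonneg _)]
    norm_num [mul_comm]
  -- Hölder: the product is integrable
  have hpqr : (1 : ENNReal) / 1 = 1 / ENNReal.ofReal a + 1 / ENNReal.ofReal b := by
    rw [one_div, one_div, one_div, inv_one, ← ENNReal.ofReal_inv_of_pos hδ1,
      ← ENNReal.ofReal_inv_of_pos hb0,
      ← ENNReal.ofReal_add (by positivity) (by positivity)]
    have e : a⁻¹ + b⁻¹ = 1 := by
      rw [ha, hb]
      field_simp
    rw [e, ENNReal.ofReal_one]
  have hmul : Integrable (fun x => g₁ x * g₂ x) μ := by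
    have := memLp_one_iff_integrable.mp (hmem₂.smul hmem₁ (hpqr := ⟨by rw [inv_one]; simpa only [one_div, div_one] using hpqr.symm⟩))
    simpa [Pi.smul_apply, smul_eq_mul, Pi.mul_def] using this
  -- conclude
  rw [integrable_withDensity_iff hρmeas hρlt]
  refine (hmul.const_mul (z φ)⁻¹).congr (Filter.Eventually.of_forall fun x => ?_)
  have hsum : ∑ i, η i * T x i
      = 2 * a * ((∑ i, θ i * T x i) - ∑ i, φ i * T x i) + ∑ i, φ i * T x i := by
    rw [hη]
    simp only [Pi.add_apply, Pi.smul_apply, Pi.sub_apply, smul_eq_mul]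
    rw [← Finset.sum_sub_distrib, Finset.mul_sum, ← Finset.sum_add_distrib]
    exact Finset.sum_congr rfl fun i _ => by ring
  simp only [hρtoReal]
  simp only [hq θ x, hq φ x]
  set u := ∑ i, θ i * T x i
  set v := ∑ i, φ i * T x i
  have hne : Real.exp (v + H x) ≠ 0 := (Real.exp_pos _).ne'
  have key : Real.exp ((2 * a * (u - v) + v + H x) / a)
      * Real.exp (δ * (v + H x) / a)
      = Real.exp (u + H x) ^ 2 / Real.exp (v + H x) := by
    rw [← Real.exp_add, sq, ← Real.exp_add, eq_div_iff hne, ← Real.exp_add]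
    congr 1
    rw [ha]; field_simp; ring
  calc (z φ)⁻¹ * (g₁ x * g₂ x)
      = |T x k| ^ 2 * (Real.exp ((2 * a * (u - v) + v + H x) / a)
          * Real.exp (δ * (v + H x) / a)) / z φ := by
        simp only [hg₁, hg₂]; rw [hsum]; ring
    _ = T x k ^ 2 * (Real.exp (u + H x) ^ 2 / Real.exp (v + H x)) / z φ := by
        rw [key, sq_abs]
    _ = (T x k * Real.exp (u + H x) / Real.exp (v + H x)) ^ 2
          * (Real.exp (v + H x) / z φ) := by
        field_simp
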